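/- Let C be a convex subset of the plane ℝ² (EuclideanSpace ℝ (Fin 2)), let x ∈ ℝ² and r > 0 with closedBall(x, r) ⊆ C, and let p ∈ frontier C with dist(x, p) = r (p is a nearest point of the boundary of C to x). Then for every w ∈ C, ⟪w − p, p − x⟫ ≤ 0; i.e., C lies entirely in the closed half-plane through p with outward normal u = p − x. Consequently, any velocity v with ⟪v − p, p − x⟫ > 0 lies outside C. -/

import Mathlib

open Metric

/-- A convex set `C` containing the ball `closedBall x r` lies in the closed half-plane
through its nearest boundary point `p` with outward normal `p - x`; consequently any
velocity `v` with `⟪v - p, p - x⟫ > 0` lies outside `C`. -/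
theorem convex_subset_halfplane_of_nearest_boundary_point
    (C : Set (EuclideanSpace ℝ (Fin 2))) (hC : Convex ℝ C)
    (x : EuclideanSpace ℝ (Fin 2)) (r : ℝ) (hr : 0 < r)
    (hball : closedBall x r ⊆ C)
    (p : EuclideanSpace ℝ (Fin 2)) (hp : p ∈ frontier C) (hd : dist x p = r) :
    (∀ w ∈ C, (inner ℝ (w - p) (p - x) : ℝ) ≤ 0) ∧
      ∀ v : EuclideanSpace ℝ (Fin 2), (0 : ℝ) < inner ℝ (v - p) (p - x) → v ∉ C := by
  have key : ∀ w ∈ C, (inner ℝ (w - p) (p - x) : ℝ) ≤ 0 := by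
    intro w hw
    by_contra h
    push_neg at h
    set δ : ℝ := inner ℝ (w - p) (p - x) with hδ
    have hnorm2 : (0:ℝ) < ‖w - x‖^2 + 1 := by positivity
    set t : ℝ := min (1/2) (δ / (‖w - x‖^2 + 1)) with ht
    have ht0 : 0 < t := lt_min (by norm_num) (div_pos h hnorm2)
    have ht1 : t < 1 := lt_of_le_of_lt (min_le_left _ _) (by norm_num)
    have htb : t * (‖w - x‖^2 + 1) ≤ δ := by
      rw [← le_div_iff₀ hnorm2]
      exact min_le_right _ _
    have h1t : 0 < 1 - t := by linarith
    set c := (1 - t) • x + t • w with hc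
    have hsub : Metric.ball c ((1-t)*r) ⊆ C := by
      intro y hy
      rw [mem_ball, dist_eq_norm] at hy
      set z := (1-t)⁻¹ • (y - t • w) with hz
      have hzx : z - x = (1-t)⁻¹ • (y - c) := by
        rw [hz, hc, smul_sub, smul_sub, smul_add, smul_smul, smul_smul,
          inv_mul_cancel₀ h1t.ne', one_smul]
        module
      have hzball : z ∈ closedBall x r := by
        rw [mem_closedBall, dist_eq_norm, hzx, norm_smul, norm_inv,
          Real.norm_of_nonneg h1t.le]
        rw [inv_mul_le_iff₀ h1t]
        linarith [hy]
      have hcomb : (1-t) • z + t • w = y := by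
        rw [hz, smul_smul, mul_inv_cancel₀ h1t.ne', one_smul]
        abel
      have := hC (hball hzball) hw h1t.le ht0.le (by ring)
      rwa [hcomb] at this
    have hpball : p ∈ Metric.ball c ((1-t)*r) := by
      rw [mem_ball, dist_eq_norm]
      have hpc : p - c = (p - x) - t • (w - x) := by
        rw [hc]; module
      have hrx : ‖p - x‖ = r := by
        rw [← dist_eq_norm, dist_comm]; exact hd
      have hip : (inner ℝ (p - x) (w - x) : ℝ) = δ + r^2 := by
        have : w - x = (w - p) + (p - x) := by abel
        rw [real_inner_comm, this, inner_add_left, hδ,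
          real_inner_self_eq_norm_sq, hrx]
      have hsq : ‖p - c‖^2 < ((1-t)*r)^2 := by
        rw [hpc, norm_sub_sq_real, real_inner_smul_right, hip,
          norm_smul, Real.norm_of_nonneg ht0.le, mul_pow, hrx]
        have h1 : t * ‖w - x‖^2 ≤ δ := by nlinarith
        nlinarith [sq_nonneg t, mul_pos ht0 hr]
      have : (0:ℝ) ≤ (1-t)*r := by positivity
      exact lt_of_pow_lt_pow_left₀ 2 this hsq
    exact hp.2 (interior_maximal hsub isOpen_ball hpball)
  refine ⟨key, fun v hv hvC => absurd (key v hvC) (not_le.mpr hv)⟩
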